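/- Let d, m be positive natural numbers, F : ℝ^d → Fin m measurable, σ > 0, and μ_x the isotropic Gaussian measure N(x, σ²I_d). Fix x ∈ ℝ^d, a class c_A : Fin m, p_A ∈ (1/2, 1], and a ∈ ℝ with Φ(a) = p_A. If μ_x {z | F z = c_A} ≥ p_A, then for every δ ∈ ℝ^d with ‖δ‖₂ < σ·a one has μ_{x+δ} {z | F z = c_A} > 1/2, and consequently μ_{x+δ} {z | F z = c_A} > μ_{x+δ} {z | F z = c} for every class c ≠ c_A. -/

import Mathlib

open MeasureTheory ProbabilityTheory Set
open scoped RealInnerProductSpace NNReal ENNReal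

/-- The isotropic Gaussian measure `N(x, σ²I_d)` on `ℝ^d`. -/
noncomputable def gaussPi (d : ℕ) (σ : ℝ) (x : EuclideanSpace ℝ (Fin d)) :
    Measure (EuclideanSpace ℝ (Fin d)) :=
  Measure.map (MeasurableEquiv.toLp 2 (Fin d → ℝ))
    (Measure.pi fun i => gaussianReal (x i) ⟨σ ^ 2, sq_nonneg σ⟩)

/-- The standard normal cumulative distribution function `Φ`. -/
noncomputable def stdNormalCDF (t : ℝ) : ℝ :=
  (gaussianReal 0 1 (Set.Iic t)).toReal

open Real

lemma gaussianReal_Iic_eq (M t : ℝ) {V : ℝ≥0} (hV : V ≠ 0) :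
    gaussianReal M V (Iic t) = gaussianReal 0 1 (Iic ((t - M) / Real.sqrt V)) := by
  have hV' : (0:ℝ) < Real.sqrt V := Real.sqrt_pos.2 (by positivity)
  have h1 : (gaussianReal 0 1).map (fun s => Real.sqrt V * s + M) = gaussianReal M V := by
    have h2 := gaussianReal_map_const_mul (μ := 0) (v := 1) (Real.sqrt V)
    have h3 : (NNReal.mk ((Real.sqrt V)^2) (sq_nonneg _)) * 1 = V := by
      ext; push_cast; rw [mul_one]; exact Real.sq_sqrt (by positivity)
    rw [h3, mul_zero] at h2
    have h4 := gaussianReal_map_add_const (μ := 0) (v := V) M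
    rw [← h2, Measure.map_map (by fun_prop) (by fun_prop), zero_add] at h4
    rw [← h4]; rfl
  rw [← h1, Measure.map_apply (by fun_prop) measurableSet_Iic]
  congr 1
  ext s
  simp only [mem_preimage, mem_Iic]
  rw [le_div_iff₀ hV']
  constructor
  · intro h; nlinarith
  · intro h; nlinarith


lemma stdNormalCDF_mono : Monotone stdNormalCDF := by
  intro s t hst
  exact ENNReal.toReal_mono (measure_ne_top _ _) (measure_mono (Iic_subset_Iic.2 hst))


lemma gaussianReal_singleton (c : ℝ) : gaussianReal 0 1 {c} = 0 := by
  refine gaussianReal_absolutelyContinuous 0 (by norm_num) ?_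
  simp


lemma stdNormalCDF_zero : stdNormalCDF 0 = 1 / 2 := by
  have hneg : (gaussianReal 0 1).map (fun s => -s) = gaussianReal 0 1 := by
    have := gaussianReal_map_const_mul (μ := 0) (v := 1) (-1)
    simpa [neg_one_mul] using this
  have h1 : gaussianReal 0 1 (Ici (0:ℝ)) = gaussianReal 0 1 (Iic (0:ℝ)) := by
    conv_lhs => rw [← hneg, Measure.map_apply (by fun_prop) measurableSet_Ici]
    congr 1
    ext s; simp
  have h2 : gaussianReal 0 1 (Iic (0:ℝ)) + gaussianReal 0 1 (Ici (0:ℝ)) = 1 := by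
    have := measure_union_add_inter (μ := gaussianReal 0 1) (s := Iic (0:ℝ)) (t := Ici 0)
      measurableSet_Ici
    rw [Iic_union_Ici, Iic_inter_Ici, Icc_self] at this
    simpa [gaussianReal_singleton] using this.symm
  rw [h1, ← two_mul] at h2
  have h3 : gaussianReal 0 1 (Iic (0:ℝ)) = 1/2 := by
    have h4 : (2:ℝ≥0∞) ≠ 0 := by norm_num
    have h5 : (2:ℝ≥0∞) ≠ ⊤ := by norm_num
    rw [← ENNReal.eq_div_iff h4 h5] at h2
    exact h2
  rw [stdNormalCDF, h3]
  norm_num [ENNReal.toReal_div]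


lemma stdNormalCDF_pos_of (u : ℝ) (hu : 0 < u) : 1/2 < stdNormalCDF u := by
  rw [← stdNormalCDF_zero]
  have hsplit : Iic u = Iic (0:ℝ) ∪ Ioc 0 u := by
    rw [Iic_union_Ioc_eq_Iic hu.le]
  have hd : Disjoint (Iic (0:ℝ)) (Ioc 0 u) := by
    simp [Set.disjoint_left]
    intro a ha; exact fun h => absurd ha (not_le.2 h)
  have h1 : gaussianReal 0 1 (Iic u) =
      gaussianReal 0 1 (Iic (0:ℝ)) + gaussianReal 0 1 (Ioc 0 u) := by
    rw [hsplit, measure_union hd measurableSet_Ioc]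
  have hpos : 0 < gaussianReal 0 1 (Ioc 0 u) := by
    rw [gaussianReal_of_var_ne_zero _ (by norm_num)]
    rw [pos_iff_ne_zero]
    intro h0
    rw [withDensity_apply_eq_zero (measurable_gaussianPDF _ _)] at h0
    have : {x | gaussianPDF 0 1 x ≠ 0} = univ := by
      ext y; simpa using (gaussianPDF_pos 0 (by norm_num) y).ne'
    rw [this, univ_inter] at h0
    rw [Real.volume_Ioc] at h0
    simp only [ENNReal.ofReal_eq_zero] at h0
    linarith
  unfold stdNormalCDF
  rw [h1]
  rw [ENNReal.toReal_add (measure_ne_top _ _) (measure_ne_top _ _)]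
  have : 0 < (gaussianReal 0 1 (Ioc 0 u)).toReal :=
    ENNReal.toReal_pos hpos.ne' (measure_ne_top _ _)
  linarith

lemma nn_pos {v : ℝ≥0} (hv : v ≠ 0) : (0:ℝ) < v := by
  exact_mod_cast pos_iff_ne_zero.2 hv

lemma gaussianReal_tilt (m b : ℝ) {v : ℝ≥0} (hv : v ≠ 0) :
    gaussianReal (m + b) v = (gaussianReal m v).withDensity
      (fun s => ENNReal.ofReal (Real.exp ((b * (s - m) - b ^ 2 / 2) / v))) := by
  have hv' : (0:ℝ) < v := nn_pos hv
  rw [gaussianReal_of_var_ne_zero _ hv, gaussianReal_of_var_ne_zero _ hv,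
    ← withDensity_mul _ (measurable_gaussianPDF _ _)
      (by exact (measurable_id.sub_const m |>.const_mul b |>.sub_const _ |>.div_const _
        |>.exp).ennreal_ofReal)]
  congr 1
  ext s
  rw [Pi.mul_apply, gaussianPDF, gaussianPDF,
    ← ENNReal.ofReal_mul (gaussianPDFReal_nonneg _ _ _)]
  congr 1
  unfold gaussianPDFReal
  rw [mul_assoc ((Real.sqrt (2 * π * v))⁻¹), ← Real.exp_add]
  congr 2
  field_simp
  ring

lemma gaussianPDFReal_conv (m1 m2 : ℝ) {v1 v2 : ℝ≥0} (h1 : v1 ≠ 0) (h2 : v2 ≠ 0) (u x : ℝ) :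
    gaussianPDFReal m1 v1 x * gaussianPDFReal m2 v2 (u - x) =
      gaussianPDFReal (m1 + m2) (v1 + v2) u *
        ((Real.sqrt (π / (((v1:ℝ) + v2) / (2 * v1 * v2))))⁻¹ *
          Real.exp (-((((v1:ℝ) + v2)) / (2 * v1 * v2)) *
            (x - ((v2:ℝ) * m1 + v1 * (u - m2)) / ((v1:ℝ) + v2)) ^ 2)) := by
  have hv1 : (0:ℝ) < v1 := nn_pos h1
  have hv2 : (0:ℝ) < v2 := nn_pos h2
  have hpi : (0:ℝ) < π := pi_pos
  unfold gaussianPDFReal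
  push_cast
  have hconst : (Real.sqrt (2 * π * v1))⁻¹ * (Real.sqrt (2 * π * v2))⁻¹ =
      (Real.sqrt (2 * π * ((v1:ℝ) + v2)))⁻¹ *
        (Real.sqrt (π / (((v1:ℝ) + v2) / (2 * v1 * v2))))⁻¹ := by
    rw [← mul_inv, ← mul_inv, ← Real.sqrt_mul (by positivity), ← Real.sqrt_mul (by positivity)]
    congr 1
    field_simp
  have hexp : -(x - m1) ^ 2 / (2 * v1) + -(u - x - m2) ^ 2 / (2 * v2) =
      -(u - (m1 + m2)) ^ 2 / (2 * ((v1:ℝ) + v2)) +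
        -((((v1:ℝ) + v2)) / (2 * v1 * v2)) *
          (x - ((v2:ℝ) * m1 + v1 * (u - m2)) / ((v1:ℝ) + v2)) ^ 2 := by
    field_simp
    ring
  calc (Real.sqrt (2 * π * v1))⁻¹ * rexp (-(x - m1) ^ 2 / (2 * v1)) *
        ((Real.sqrt (2 * π * v2))⁻¹ * rexp (-(u - x - m2) ^ 2 / (2 * v2)))
      = ((Real.sqrt (2 * π * v1))⁻¹ * (Real.sqrt (2 * π * v2))⁻¹) *
        rexp (-(x - m1) ^ 2 / (2 * v1) + -(u - x - m2) ^ 2 / (2 * v2)) := by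
        rw [Real.exp_add]; ring
    _ = _ := by
        rw [hconst, hexp, Real.exp_add]; ring

lemma integrable_gaussianPDFReal_conv (m1 m2 : ℝ) {v1 v2 : ℝ≥0} (h1 : v1 ≠ 0) (h2 : v2 ≠ 0)
    (u : ℝ) :
    Integrable (fun x => gaussianPDFReal m1 v1 x * gaussianPDFReal m2 v2 (u - x)) := by
  have hv1 : (0:ℝ) < v1 := nn_pos h1
  have hv2 : (0:ℝ) < v2 := nn_pos h2
  have hb : (0:ℝ) < ((v1:ℝ) + v2) / (2 * v1 * v2) := by positivity
  simp_rw [gaussianPDFReal_conv m1 m2 h1 h2 u]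
  refine Integrable.const_mul ?_ _
  refine Integrable.const_mul ?_ _
  exact (integrable_exp_neg_mul_sq hb).comp_sub_right _

lemma integral_gaussianPDFReal_conv (m1 m2 : ℝ) {v1 v2 : ℝ≥0} (h1 : v1 ≠ 0) (h2 : v2 ≠ 0)
    (u : ℝ) :
    ∫ x, gaussianPDFReal m1 v1 x * gaussianPDFReal m2 v2 (u - x) =
      gaussianPDFReal (m1 + m2) (v1 + v2) u := by
  have hv1 : (0:ℝ) < v1 := nn_pos h1
  have hv2 : (0:ℝ) < v2 := nn_pos h2
  have hb : (0:ℝ) < ((v1:ℝ) + v2) / (2 * v1 * v2) := by positivity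
  simp_rw [gaussianPDFReal_conv m1 m2 h1 h2 u]
  rw [MeasureTheory.integral_const_mul, MeasureTheory.integral_const_mul]
  rw [integral_sub_right_eq_self (μ := volume)
    (fun y => rexp (-((((v1:ℝ) + v2)) / (2 * v1 * v2)) * y ^ 2)) _]
  rw [integral_gaussian]
  rw [inv_mul_cancel₀ (by positivity), mul_one]

lemma gaussianReal_conv (m1 m2 : ℝ) (v1 v2 : ℝ≥0) :
    ((gaussianReal m1 v1).prod (gaussianReal m2 v2)).map (fun p => p.1 + p.2) =
      gaussianReal (m1 + m2) (v1 + v2) := by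
  by_cases h1 : v1 = 0
  · subst h1
    rw [gaussianReal_zero_var, Measure.dirac_prod,
      Measure.map_map (by fun_prop) (by fun_prop)]
    have : ((fun p : ℝ × ℝ => p.1 + p.2) ∘ Prod.mk m1) = (m1 + ·) := rfl
    rw [this, gaussianReal_map_const_add, add_comm, zero_add]
  by_cases h2 : v2 = 0
  · subst h2
    rw [gaussianReal_zero_var, Measure.prod_dirac,
      Measure.map_map (by fun_prop) (by fun_prop)]
    have : ((fun p : ℝ × ℝ => p.1 + p.2) ∘ (fun x => (x, m2))) = (· + m2) := rfl
    rw [this, gaussianReal_map_add_const, add_zero]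
  refine Measure.ext_of_Iic _ _ fun t => ?_
  rw [Measure.map_apply (by fun_prop) measurableSet_Iic]
  have hpre : (fun p : ℝ × ℝ => p.1 + p.2) ⁻¹' Iic t = {p : ℝ × ℝ | p.1 + p.2 ≤ t} := rfl
  rw [hpre, Measure.prod_apply (by
    exact measurableSet_le (by fun_prop) measurable_const)]
  have hfib : ∀ x : ℝ, (Prod.mk x ⁻¹' {p : ℝ × ℝ | p.1 + p.2 ≤ t}) = Iic (t - x) := by
    intro x; ext y; simp [le_sub_iff_add_le, add_comm]
  simp_rw [hfib]
  have hshift : ∀ x : ℝ, gaussianReal m2 v2 (Iic (t - x)) =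
      gaussianReal (m2 + x) v2 (Iic t) := by
    intro x
    rw [← gaussianReal_map_add_const (μ := m2) (v := v2) x,
      Measure.map_apply (by fun_prop) measurableSet_Iic]
    congr 1
    ext y; simp only [mem_preimage, mem_Iic]
    constructor <;> intro h <;> linarith
  simp_rw [hshift]
  have happ : ∀ x : ℝ, gaussianReal (m2 + x) v2 (Iic t) =
      ∫⁻ y in Iic t, ENNReal.ofReal (gaussianPDFReal (m2 + x) v2 y) := by
    intro x; rw [gaussianReal_apply _ h2]; rfl
  simp_rw [happ]
  rw [lintegral_lintegral_swap (by
    apply Measurable.aemeasurable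
    apply Measurable.ennreal_ofReal
    unfold gaussianPDFReal
    fun_prop)]
  have hinner : ∀ y : ℝ,
      (∫⁻ x, ENNReal.ofReal (gaussianPDFReal (m2 + x) v2 y) ∂gaussianReal m1 v1) =
      ENNReal.ofReal (gaussianPDFReal (m1 + m2) (v1 + v2) y) := by
    intro y
    rw [gaussianReal_of_var_ne_zero _ h1,
      lintegral_withDensity_eq_lintegral_mul _ (measurable_gaussianPDF _ _) (by
        apply Measurable.ennreal_ofReal
        unfold gaussianPDFReal
        fun_prop)]
    have : ∀ x : ℝ, (gaussianPDF m1 v1 * fun x => ENNReal.ofReal (gaussianPDFReal (m2 + x) v2 y)) x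
        = ENNReal.ofReal (gaussianPDFReal m1 v1 x * gaussianPDFReal m2 v2 (y - x)) := by
      intro x
      rw [Pi.mul_apply, gaussianPDF, ← ENNReal.ofReal_mul (gaussianPDFReal_nonneg _ _ _)]
      congr 2
      rw [gaussianPDFReal_sub]
    simp_rw [this]
    rw [← ofReal_integral_eq_lintegral_ofReal (integrable_gaussianPDFReal_conv m1 m2 h1 h2 y)
      (ae_of_all _ fun x => mul_nonneg (gaussianPDFReal_nonneg _ _ _)
        (gaussianPDFReal_nonneg _ _ _))]
    rw [integral_gaussianPDFReal_conv m1 m2 h1 h2 y]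
  simp_rw [hinner]
  rw [gaussianReal_apply _ (by simp [h1, h2]) (Iic t)]
  rfl

lemma lintegral_pi_prod : ∀ {n : ℕ} (μ : Fin n → Measure ℝ), (∀ i, IsProbabilityMeasure (μ i)) →
    ∀ (f : Fin n → ℝ → ℝ≥0∞), (∀ i, Measurable (f i)) →
    ∫⁻ z, ∏ i, f i (z i) ∂Measure.pi μ = ∏ i, ∫⁻ x, f i x ∂μ i := by
  intro n
  induction n with
  | zero =>
    intro μ hμ f hf
    rw [Measure.pi_of_empty]
    simp
  | succ n ih =>
    intro μ hμ f hf
    haveI := hμ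
    have hmp := (measurePreserving_piFinSuccAbove μ 0).symm
    have hF : Measurable fun z : Fin (n+1) → ℝ => ∏ i, f i (z i) := by
      apply Finset.measurable_prod
      intro i _
      exact (hf i).comp (measurable_pi_apply i)
    rw [← hmp.lintegral_comp hF]
    have hpt : ∀ p : ℝ × (Fin n → ℝ),
        (∏ i, f i (((MeasurableEquiv.piFinSuccAbove (fun _ => ℝ) 0).symm p) i)) =
        f 0 p.1 * ∏ j, f (Fin.succAbove 0 j) (p.2 j) := by
      intro p
      rw [MeasurableEquiv.piFinSuccAbove_symm_apply, Fin.prod_univ_succAbove _ 0]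
      simp
    simp_rw [hpt]
    rw [lintegral_prod_mul (f := fun x => f 0 x)
      (g := fun w : Fin n → ℝ => ∏ j, f (Fin.succAbove 0 j) (w j)) ((hf 0).aemeasurable) (by
      apply Measurable.aemeasurable
      apply Finset.measurable_prod
      intro j _
      exact (hf _).comp (measurable_pi_apply j))]
    rw [ih _ (fun j => hμ _) _ (fun j => hf _)]
    rw [Fin.prod_univ_succAbove (fun i => ∫⁻ x, f i x ∂μ i) 0]


lemma pi_withDensity {n : ℕ} (μ ν : Fin n → Measure ℝ)
    [∀ i, IsProbabilityMeasure (μ i)] [∀ i, SigmaFinite (ν i)]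
    (f : Fin n → ℝ → ℝ≥0∞) (hf : ∀ i, Measurable (f i))
    (hν : ∀ i, ν i = (μ i).withDensity (f i)) :
    Measure.pi ν = (Measure.pi μ).withDensity (fun z => ∏ i, f i (z i)) := by
  refine Measure.pi_eq fun s hs => ?_
  rw [withDensity_apply _ (MeasurableSet.univ_pi hs)]
  have h1 : ∫⁻ z in univ.pi s, ∏ i, f i (z i) ∂Measure.pi μ
      = ∫⁻ z, ∏ i, (s i).indicator (f i) (z i) ∂Measure.pi μ := by
    rw [← lintegral_indicator (MeasurableSet.univ_pi hs)]
    congr 1; ext z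
    by_cases hz : z ∈ univ.pi s
    · rw [indicator_of_mem hz]
      exact (Finset.prod_congr rfl fun i _ =>
        (indicator_of_mem (hz i (Set.mem_univ i)) _)).symm
    · rw [indicator_of_notMem hz]
      rw [mem_univ_pi] at hz; push_neg at hz; obtain ⟨i, hi⟩ := hz
      exact (Finset.prod_eq_zero (Finset.mem_univ i) (by rw [indicator_of_notMem hi])).symm
  rw [h1, lintegral_pi_prod μ inferInstance _ (fun i => (hf i).indicator (hs i))]
  refine Finset.prod_congr rfl fun i _ => ?_
  rw [hν i, withDensity_apply _ (hs i), ← lintegral_indicator (hs i)]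


lemma pi_gauss_sum : ∀ (n : ℕ) (m : Fin n → ℝ) (v : Fin n → ℝ≥0),
    (Measure.pi fun i => gaussianReal (m i) (v i)).map (fun z => ∑ i, z i) =
      gaussianReal (∑ i, m i) (∑ i, v i) := by
  intro n
  induction n with
  | zero =>
    intro m v
    rw [Measure.pi_of_empty, Measure.map_dirac' (by fun_prop : Measurable fun z : Fin 0 → ℝ => ∑ i, z i)]
    simp
  | succ n ih =>
    intro m v
    have hmp := measurePreserving_piFinSuccAbove (fun i => gaussianReal (m i) (v i)) 0
    have h1 : (Measure.pi fun i => gaussianReal (m i) (v i)).map (fun z => ∑ i, z i)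
        = ((gaussianReal (m 0) (v 0)).prod
            (Measure.pi fun j => gaussianReal (m (Fin.succAbove 0 j)) (v (Fin.succAbove 0 j)))).map
            (fun p : ℝ × (Fin n → ℝ) => p.1 + ∑ j, p.2 j) := by
      rw [← hmp.map_eq, Measure.map_map (by fun_prop)
        (MeasurableEquiv.piFinSuccAbove (fun _ => ℝ) 0).measurable]
      congr 1
      funext z
      show (∑ i, z i) = _
      simp only [Function.comp_apply, MeasurableEquiv.piFinSuccAbove_apply]
      exact Fin.sum_univ_succAbove z 0
    rw [h1]
    have h2 : (fun p : ℝ × (Fin n → ℝ) => p.1 + ∑ j, p.2 j)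
        = (fun q : ℝ × ℝ => q.1 + q.2) ∘ (Prod.map id (fun w : Fin n → ℝ => ∑ j, w j)) := rfl
    rw [h2, ← Measure.map_map (by fun_prop) (by fun_prop)]
    rw [← Measure.map_prod_map _ _ measurable_id (by fun_prop)]
    rw [Measure.map_id, ih]
    rw [gaussianReal_conv]
    rw [← Fin.sum_univ_succAbove m 0, ← Fin.sum_univ_succAbove v 0]


noncomputable def sqNN (r : ℝ) : ℝ≥0 := ⟨r ^ 2, sq_nonneg r⟩


lemma pi_gauss_linear (n : ℕ) (x δ : Fin n → ℝ) (V : ℝ≥0) :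
    (Measure.pi fun i => gaussianReal (x i) V).map (fun z => ∑ i, δ i * z i) =
      gaussianReal (∑ i, δ i * x i) (∑ i, sqNN (δ i) * V) := by
  have hmp : MeasurePreserving (fun (z : Fin n → ℝ) i => δ i * z i)
      (Measure.pi fun i => gaussianReal (x i) V)
      (Measure.pi fun i => gaussianReal (δ i * x i) (sqNN (δ i) * V)) :=
    measurePreserving_pi _ _ (fun i =>
      ⟨by fun_prop, gaussianReal_map_const_mul (δ i)⟩)
  have hcomp : (fun z : Fin n → ℝ => ∑ i, δ i * z i)
      = (fun w : Fin n → ℝ => ∑ i, w i) ∘ (fun z i => δ i * z i) := by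
    funext z; simp [Function.comp]
  rw [hcomp, ← Measure.map_map (by fun_prop) (by fun_prop), hmp.map_eq, pi_gauss_sum]

lemma np_core {n : ℕ} {V : ℝ≥0} (hV : V ≠ 0) (x δ : Fin n → ℝ)
    (E : Set (Fin n → ℝ)) (hE : MeasurableSet E) (a : ℝ)
    (hδ : 0 < ∑ i, (δ i) ^ 2)
    (hEa : ENNReal.ofReal (stdNormalCDF a) ≤ Measure.pi (fun i => gaussianReal (x i) V) E) :
    ENNReal.ofReal (stdNormalCDF (a - Real.sqrt ((∑ i, (δ i) ^ 2) * V) / V)) ≤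
      Measure.pi (fun i => gaussianReal (x i + δ i) V) E := by
  have hV' : (0:ℝ) < V := by exact_mod_cast pos_iff_ne_zero.2 hV
  set ν : (Fin n → ℝ) → Measure (Fin n → ℝ) :=
    fun y => Measure.pi (fun i => gaussianReal (y i) V) with hνdef
  set M : ℝ := ∑ i, δ i * x i with hM
  set S2 : ℝ := ∑ i, (δ i) ^ 2 with hS2
  set sv : ℝ := Real.sqrt (S2 * V) with hsv
  have hsv' : 0 < sv := Real.sqrt_pos.2 (by positivity)
  have hsv2 : sv ^ 2 = S2 * V := Real.sq_sqrt (by positivity)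
  set c : ℝ := M + S2 / 2 with hc
  set R : (Fin n → ℝ) → ℝ≥0∞ :=
    fun z => ENNReal.ofReal (Real.exp (((∑ i, δ i * z i) - c) / V)) with hR
  set t : ℝ := M + sv * a with htdef
  set H : Set (Fin n → ℝ) := (fun z => ∑ i, δ i * z i) ⁻¹' (Iic t) with hHdef
  have hl : Measurable (fun z : Fin n → ℝ => ∑ i, δ i * z i) :=
    Finset.measurable_sum _ (fun i _ => by fun_prop)
  have hH : MeasurableSet H := hl measurableSet_Iic
  have hRmeas : Measurable R :=
    (((hl.sub_const c).div_const _).exp).ennreal_ofReal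
  -- density representation
  have h_density : ν (fun i => x i + δ i) = (ν x).withDensity R := by
    show Measure.pi (fun i => gaussianReal (x i + δ i) V)
      = (Measure.pi fun i => gaussianReal (x i) V).withDensity R
    rw [pi_withDensity (fun i => gaussianReal (x i) V)
      (fun i => gaussianReal (x i + δ i) V)
      (fun i s => ENNReal.ofReal (Real.exp ((δ i * (s - x i) - (δ i) ^ 2 / 2) / V)))
      (fun i => ((((measurable_id.sub_const (x i)).const_mul (δ i)).sub_const
        _).div_const _).exp.ennreal_ofReal)
      (fun i => gaussianReal_tilt (x i) (δ i) hV)]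
    congr 1
    funext z
    rw [← ENNReal.ofReal_prod_of_nonneg (fun i _ => (Real.exp_nonneg _))]
    congr 1
    rw [← Real.exp_sum]
    congr 1
    rw [← Finset.sum_div]
    congr 1
    have : ∀ i ∈ Finset.univ, δ i * (z i - x i) - (δ i) ^ 2 / 2
        = δ i * z i - (δ i * x i + (δ i) ^ 2 / 2) := fun i _ => by ring
    rw [Finset.sum_congr rfl this, Finset.sum_sub_distrib, Finset.sum_add_distrib, hc, hM, hS2,
      Finset.sum_div]
  -- laws of the linear functional
  have hVt : ((∑ i, sqNN (δ i) * V : ℝ≥0) : ℝ) = S2 * V := by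
    have hsq : ∀ i, ((sqNN (δ i) * V : ℝ≥0) : ℝ) = δ i ^ 2 * V := fun i => by
      rw [NNReal.coe_mul]; rfl
    rw [NNReal.coe_sum, Finset.sum_congr rfl (fun i _ => hsq i), ← Finset.sum_mul]
  have hVt0 : (∑ i, sqNN (δ i) * V : ℝ≥0) ≠ 0 := by
    intro h0
    have : ((∑ i, sqNN (δ i) * V : ℝ≥0) : ℝ) = 0 := by rw [h0]; simp
    rw [hVt] at this
    nlinarith
  have hsqrtVt : Real.sqrt ((∑ i, sqNN (δ i) * V : ℝ≥0) : ℝ) = sv := by rw [hVt]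
  have hμH : ν x H = ENNReal.ofReal (stdNormalCDF a) := by
    rw [hνdef, hHdef, ← Measure.map_apply hl measurableSet_Iic, pi_gauss_linear,
      gaussianReal_Iic_eq _ _ hVt0, hsqrtVt]
    have : (t - M) / sv = a := by rw [htdef]; field_simp; ring
    rw [this, stdNormalCDF, ENNReal.ofReal_toReal (measure_ne_top _ _)]
  have hμ'H : ν (fun i => x i + δ i) H = ENNReal.ofReal (stdNormalCDF (a - sv / V)) := by
    rw [hνdef, hHdef, ← Measure.map_apply hl measurableSet_Iic, pi_gauss_linear,
      gaussianReal_Iic_eq _ _ hVt0, hsqrtVt]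
    have hmean : (∑ i, δ i * (x i + δ i)) = M + S2 := by
      rw [hM, hS2, ← Finset.sum_add_distrib]
      exact Finset.sum_congr rfl fun i _ => by ring
    rw [hmean]
    have : (t - (M + S2)) / sv = a - sv / V := by
      rw [htdef]
      have h1 : S2 = sv * sv / V := by
        field_simp
        nlinarith [hsv2]
      rw [h1]
      field_simp
      ring
    rw [this, stdNormalCDF, ENNReal.ofReal_toReal (measure_ne_top _ _)]
  -- threshold
  set k : ℝ≥0∞ := ENNReal.ofReal (Real.exp ((t - c) / V)) with hk
  have hRle : ∀ z ∈ H, R z ≤ k := by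
    intro z hz
    rw [hR, hk]
    apply ENNReal.ofReal_le_ofReal
    apply Real.exp_le_exp.2
    have hz' : (∑ i, δ i * z i) ≤ t := hz
    gcongr
  have hRge : ∀ z ∉ H, k ≤ R z := by
    intro z hz
    rw [hR, hk]
    apply ENNReal.ofReal_le_ofReal
    apply Real.exp_le_exp.2
    have hz' : t ≤ ∑ i, δ i * z i := le_of_not_ge (by exact fun h => hz h)
    gcongr
  have hkfin : k ≠ ⊤ := ENNReal.ofReal_ne_top
  -- NP chain
  haveI : ∀ i, IsProbabilityMeasure (gaussianReal (x i) V) := fun i => inferInstance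
  have hprob : IsProbabilityMeasure (ν x) := by rw [hνdef]; infer_instance
  have hprob' : IsProbabilityMeasure (ν (fun i => x i + δ i)) := by rw [hνdef]; infer_instance
  have hHE : ν x H ≤ ν x E := by rw [hμH]; exact hEa
  have e3 : ν x (H \ E) ≤ ν x (E \ H) := by
    have d1 : ν x (H \ E) + ν x (H ∩ E) = ν x H := measure_diff_add_inter H hE
    have d2 : ν x (E \ H) + ν x (E ∩ H) = ν x E := measure_diff_add_inter E hH
    have hcomm : H ∩ E = E ∩ H := inter_comm _ _
    have hfin : ν x (H ∩ E) ≠ ⊤ := measure_ne_top _ _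
    have : ν x (H \ E) + ν x (H ∩ E) ≤ ν x (E \ H) + ν x (H ∩ E) := by
      rw [d1, hcomm, d2]; exact hHE
    exact ENNReal.add_le_add_iff_right hfin |>.1 this
  have e1 : k * ν x (E \ H) ≤ ν (fun i => x i + δ i) (E \ H) := by
    rw [h_density, withDensity_apply _ (hE.diff hH), ← setLIntegral_const]
    exact setLIntegral_mono hRmeas (fun z hz => hRge z hz.2)
  have e2 : ν (fun i => x i + δ i) (H \ E) ≤ k * ν x (H \ E) := by
    rw [h_density, withDensity_apply _ (hH.diff hE), ← setLIntegral_const]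
    exact setLIntegral_mono measurable_const (fun z hz => hRle z hz.1)
  have key : ν (fun i => x i + δ i) H ≤ ν (fun i => x i + δ i) E := by
    have d1 : ν (fun i => x i + δ i) (H \ E) + ν (fun i => x i + δ i) (H ∩ E)
        = ν (fun i => x i + δ i) H := measure_diff_add_inter H hE
    have d2 : ν (fun i => x i + δ i) (E \ H) + ν (fun i => x i + δ i) (E ∩ H)
        = ν (fun i => x i + δ i) E := measure_diff_add_inter E hH
    calc ν (fun i => x i + δ i) H
        = ν (fun i => x i + δ i) (H \ E) + ν (fun i => x i + δ i) (H ∩ E) := d1.symm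
      _ ≤ k * ν x (H \ E) + ν (fun i => x i + δ i) (H ∩ E) := add_le_add_left e2 _
      _ ≤ k * ν x (E \ H) + ν (fun i => x i + δ i) (H ∩ E) :=
          add_le_add_left (mul_le_mul_right e3 k) _
      _ ≤ ν (fun i => x i + δ i) (E \ H) + ν (fun i => x i + δ i) (H ∩ E) :=
          add_le_add_left e1 _
      _ = ν (fun i => x i + δ i) (E \ H) + ν (fun i => x i + δ i) (E ∩ H) := by
          rw [inter_comm]
      _ = ν (fun i => x i + δ i) E := d2
  calc ENNReal.ofReal (stdNormalCDF (a - Real.sqrt (S2 * ↑V) / ↑V))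
      = ν (fun i => x i + δ i) H := hμ'H.symm
    _ ≤ ν (fun i => x i + δ i) E := key

theorem randomized_smoothing_binary_certificate
    (d m : ℕ) (hd : 0 < d) (hm : 0 < m)
    (F : EuclideanSpace ℝ (Fin d) → Fin m) (hF : Measurable F)
    (σ : ℝ) (hσ : 0 < σ)
    (x : EuclideanSpace ℝ (Fin d)) (cA : Fin m)
    (pA : ℝ) (hpA : pA ∈ Set.Ioc (1 / 2 : ℝ) 1)
    (a : ℝ) (ha : stdNormalCDF a = pA)
    (hA : (gaussPi d σ x {z | F z = cA}).toReal ≥ pA) :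
    ∀ δ : EuclideanSpace ℝ (Fin d), ‖δ‖ < σ * a →
      (gaussPi d σ (x + δ) {z | F z = cA}).toReal > 1 / 2 ∧
      ∀ c : Fin m, c ≠ cA →
        gaussPi d σ (x + δ) {z | F z = c} < gaussPi d σ (x + δ) {z | F z = cA} := by
  intro δ hδnorm
  set V : ℝ≥0 := ⟨σ ^ 2, sq_nonneg σ⟩ with hVdef
  have hVc : (V : ℝ) = σ ^ 2 := rfl
  have hV : V ≠ 0 := by
    intro h
    have : (V : ℝ) = 0 := by rw [h]; simp
    rw [hVc] at this
    nlinarith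
  have hmeasE : ∀ c : Fin m, MeasurableSet {z : EuclideanSpace ℝ (Fin d) | F z = c} :=
    fun c => hF (measurableSet_singleton c)
  have happ : ∀ (y : EuclideanSpace ℝ (Fin d)) (S : Set (EuclideanSpace ℝ (Fin d))),
      gaussPi d σ y S = Measure.pi (fun i => gaussianReal (y i) V)
        ((MeasurableEquiv.toLp 2 (Fin d → ℝ)) ⁻¹' S) := by
    intro y S
    rw [gaussPi, MeasurableEquiv.map_apply]
  haveI hprobPi : ∀ y : EuclideanSpace ℝ (Fin d),
      IsProbabilityMeasure (Measure.pi (fun i => gaussianReal (y i) V)) :=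
    fun y => inferInstance
  haveI hprob : ∀ y : EuclideanSpace ℝ (Fin d), IsProbabilityMeasure (gaussPi d σ y) := by
    intro y
    rw [gaussPi]
    exact Measure.isProbabilityMeasure_map (Measurable.aemeasurable (by fun_prop))
  have hΦa : stdNormalCDF a = pA := ha
  have hpA1 : 1 / 2 < pA := hpA.1
  have ha_pos : 0 < a := by
    by_contra h
    push_neg at h
    have : stdNormalCDF a ≤ stdNormalCDF 0 := stdNormalCDF_mono h
    rw [stdNormalCDF_zero, hΦa] at this
    linarith
  -- main bound
  have key : (gaussPi d σ (x + δ) {z | F z = cA}).toReal > 1 / 2 := by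
    by_cases hδ0 : δ = 0
    · subst hδ0
      rw [add_zero]
      linarith
    · set ES : Set (Fin d → ℝ) :=
        ((MeasurableEquiv.toLp 2 (Fin d → ℝ)) ⁻¹' {z | F z = cA}) with hES
      have hESm : MeasurableSet ES :=
        (MeasurableEquiv.toLp 2 (Fin d → ℝ)).measurable (hmeasE cA)
      set S2 : ℝ := ∑ i, (δ i) ^ 2 with hS2def
      have hnorm : ‖δ‖ = Real.sqrt S2 := by
        rw [EuclideanSpace.norm_eq]
        congr 1
        exact Finset.sum_congr rfl fun i _ => by rw [Real.norm_eq_abs, sq_abs]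
      have hnpos : 0 < ‖δ‖ := norm_pos_iff.2 hδ0
      have hS2pos : 0 < S2 := by
        by_contra h
        push_neg at h
        rw [hnorm] at hnpos
        have := Real.sqrt_eq_zero_of_nonpos h ▸ hnpos
        simp [Real.sqrt_eq_zero_of_nonpos h] at hnpos
      have hEa : ENNReal.ofReal (stdNormalCDF a) ≤
          Measure.pi (fun i => gaussianReal (x i) V) ES := by
        rw [← happ x {z | F z = cA}]
        calc ENNReal.ofReal (stdNormalCDF a) = ENNReal.ofReal pA := by rw [hΦa]
          _ ≤ ENNReal.ofReal ((gaussPi d σ x {z | F z = cA}).toReal) :=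
              ENNReal.ofReal_le_ofReal hA
          _ = gaussPi d σ x {z | F z = cA} :=
              ENNReal.ofReal_toReal (measure_ne_top _ _)
      have hnp := np_core hV (fun i => x i) (fun i => δ i) ES hESm a hS2pos hEa
      have hid : (Measure.pi fun i => gaussianReal ((fun i => x i) i + (fun i => δ i) i) V)
          = Measure.pi (fun i => gaussianReal ((x + δ) i) V) := rfl
      have ha' : a - Real.sqrt (S2 * V) / V = a - ‖δ‖ / σ := by
        rw [hnorm, hVc]
        congr 1
        rw [Real.sqrt_mul hS2pos.le, Real.sqrt_sq hσ.le]
        field_simp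
      have ha'pos : 0 < a - ‖δ‖ / σ := by
        rw [sub_pos, div_lt_iff₀ hσ]
        linarith [hδnorm]
      have hΦ' : 1 / 2 < stdNormalCDF (a - ‖δ‖ / σ) := stdNormalCDF_pos_of _ ha'pos
      rw [hid] at hnp
      have hfinal : ENNReal.ofReal (stdNormalCDF (a - ‖δ‖ / σ)) ≤
          gaussPi d σ (x + δ) {z | F z = cA} := by
        rw [happ (x + δ) {z | F z = cA}]
        rw [← ha']
        exact hnp
      have := ENNReal.toReal_mono (measure_ne_top _ _) hfinal
      rw [ENNReal.toReal_ofReal (by linarith)] at this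
      linarith
  refine ⟨key, fun c hc => ?_⟩
  set μ' := gaussPi d σ (x + δ) with hμ'
  have h2 : μ' {z | F z = c} ≤ μ' ({z | F z = cA}ᶜ) := by
    apply measure_mono
    intro z hz
    simp only [mem_compl_iff, mem_setOf_eq] at *
    rw [hz]
    exact hc
  have h3 : μ' ({z | F z = cA}ᶜ) = 1 - μ' {z | F z = cA} := by
    rw [measure_compl (hmeasE cA) (measure_ne_top _ _), measure_univ]
  have hne : μ' {z | F z = cA} ≠ ⊤ := measure_ne_top _ _
  have hle1 : μ' {z | F z = cA} ≤ 1 := prob_le_one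
  have h4 : 1 - μ' {z | F z = cA} < μ' {z | F z = cA} := by
    rw [← ENNReal.toReal_lt_toReal (by simp [ENNReal.sub_ne_top]) hne]
    rw [ENNReal.toReal_sub_of_le hle1 (by norm_num)]
    simp only [ENNReal.toReal_one]
    linarith [key]
  calc μ' {z | F z = c} ≤ 1 - μ' {z | F z = cA} := h3 ▸ h2
    _ < μ' {z | F z = cA} := h4
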